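/- Let Y be a real Banach space such that the map y* ↦ ‖y*‖ is twice continuously (Fréchet) differentiable on Y* ∖ {0}, and let Z be a strongly flat real Banach space. Let X = Y ⊕∞ Z and, for bounded linear operators A : Y → Y and B : Z → Y, define the bounded linear operator T on X by T(y, z) = (A y + B z, 0). If T attains its numerical radius, then B has finite rank, i.e. the range of B is a finite-dimensional subspace of Y. -/

import Mathlib

open scoped ENNReal

/-- The numerical radius of a bounded linear operator `T` on a real Banach space `X`. -/
noncomputable def numRadius {X : Type*} [NormedAddCommGroup X] [NormedSpace ℝ X]
    (T : X →L[ℝ] X) : ℝ :=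
  sSup {r : ℝ | ∃ (x : X) (f : X →L[ℝ] ℝ), ‖x‖ = 1 ∧ ‖f‖ = 1 ∧ f x = 1 ∧ r = |f (T x)|}

/-- `T` attains its numerical radius. -/
def AttainsNumRadius {X : Type*} [NormedAddCommGroup X] [NormedSpace ℝ X]
    (T : X →L[ℝ] X) : Prop :=
  ∃ (x : X) (f : X →L[ℝ] ℝ), ‖x‖ = 1 ∧ ‖f‖ = 1 ∧ f x = 1 ∧ |f (T x)| = numRadius T

/-- The set of directions of flatness of `Z` at `z₀`. -/
def FlatDirections {Z : Type*} [NormedAddCommGroup Z] (z₀ : Z) : Set Z :=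
  {z : Z | ‖z₀ + z‖ ≤ 1 ∧ ‖z₀ - z‖ ≤ 1}

/-- A Banach space `Z` is strongly flat if for every `z₀` in its unit sphere, the quotient
of `Z` by the closed linear span of the directions of flatness at `z₀` is
finite-dimensional. -/
def StronglyFlat (Z : Type*) [NormedAddCommGroup Z] [NormedSpace ℝ Z] : Prop :=
  ∀ z₀ : Z, ‖z₀‖ = 1 →
    FiniteDimensional ℝ (Z ⧸ (Submodule.span ℝ (FlatDirections z₀)).topologicalClosure)

set_option maxHeartbeats 1600000

open NormedSpace

section AuxiliaryLemmas
variable {Y Z : Type*} [NormedAddCommGroup Y] [NormedSpace ℝ Y]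
  [NormedAddCommGroup Z] [NormedSpace ℝ Z]

noncomputable def pairFun (g : Y →L[ℝ] ℝ) (h : Z →L[ℝ] ℝ) : (Y × Z) →L[ℝ] ℝ :=
  g.comp (ContinuousLinearMap.fst ℝ Y Z) + h.comp (ContinuousLinearMap.snd ℝ Y Z)

@[simp] lemma pairFun_apply (g : Y →L[ℝ] ℝ) (h : Z →L[ℝ] ℝ) (p : Y × Z) :
    pairFun g h p = g p.1 + h p.2 := rfl

lemma pairFun_norm (g : Y →L[ℝ] ℝ) (h : Z →L[ℝ] ℝ) : ‖pairFun g h‖ = ‖g‖ + ‖h‖ := by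
  refine le_antisymm ?_ ?_
  · refine ContinuousLinearMap.opNorm_le_bound _ (by positivity) fun p => ?_
    rw [pairFun_apply]
    calc |g p.1 + h p.2| ≤ |g p.1| + |h p.2| := abs_add_le _ _
      _ ≤ ‖g‖ * ‖p.1‖ + ‖h‖ * ‖p.2‖ := by
          gcongr
          · exact g.le_opNorm p.1
          · exact h.le_opNorm p.2
      _ ≤ ‖g‖ * ‖p‖ + ‖h‖ * ‖p‖ := by
          gcongr
          · exact norm_fst_le p
          · exact norm_snd_le p
      _ = (‖g‖ + ‖h‖) * ‖p‖ := by ring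
  · refine le_of_forall_pos_le_add fun ε hε => ?_
    obtain ⟨y, hy, hgy⟩ := g.exists_lt_apply_of_lt_opNorm (r := ‖g‖ - ε/2) (by linarith)
    obtain ⟨z, hz, hhz⟩ := h.exists_lt_apply_of_lt_opNorm (r := ‖h‖ - ε/2) (by linarith)
    set y' := if g y < 0 then -y else y with hy'
    set z' := if h z < 0 then -z else z with hz'
    have hgy' : g y' = |g y| := by
      rw [hy']; rcases lt_or_ge (g y) 0 with hc | hc
      · simp [hc, abs_of_neg hc]
      · simp [not_lt.2 hc, abs_of_nonneg hc]
    have hhz' : h z' = |h z| := by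
      rw [hz']; rcases lt_or_ge (h z) 0 with hc | hc
      · simp [hc, abs_of_neg hc]
      · simp [not_lt.2 hc, abs_of_nonneg hc]
    have hny' : ‖y'‖ ≤ 1 := by
      rw [hy']; split <;> simpa using le_of_lt hy
    have hnz' : ‖z'‖ ≤ 1 := by
      rw [hz']; split <;> simpa using le_of_lt hz
    have hp : ‖(y', z')‖ ≤ 1 := by
      rw [Prod.norm_def]; exact max_le hny' hnz'
    have h1 : pairFun g h (y', z') ≤ ‖pairFun g h‖ := by
      calc pairFun g h (y', z') ≤ |pairFun g h (y', z')| := le_abs_self _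
        _ ≤ ‖pairFun g h‖ * ‖(y', z')‖ := (pairFun g h).le_opNorm _
        _ ≤ ‖pairFun g h‖ * 1 := by
            have := norm_nonneg (pairFun g h); nlinarith
        _ = ‖pairFun g h‖ := mul_one _
    have h2 : ‖g‖ - ε/2 + (‖h‖ - ε/2) < pairFun g h (y', z') := by
      rw [pairFun_apply]
      rw [Real.norm_eq_abs] at hgy hhz
      simp only [hgy', hhz']
      exact add_lt_add hgy hhz
    linarith

/-- The identity as a linear isometry between `Y ⊕∞ Z` and `Y × Z` with max norm. -/
noncomputable def prodIsoInf (Y Z : Type*) [NormedAddCommGroup Y] [NormedAddCommGroup Z]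
    [NormedSpace ℝ Y] [NormedSpace ℝ Z] : WithLp ∞ (Y × Z) ≃ₗᵢ[ℝ] Y × Z where
  toLinearEquiv := WithLp.linearEquiv ∞ ℝ (Y × Z)
  norm_map' := fun x => by
    rw [Prod.norm_def, WithLp.prod_norm_eq_sup]
    rfl

/-- Quantitative Šmulyan estimate. -/
lemma smulyan_approx (φ : Y →L[ℝ] ℝ) {ξ : (Y →L[ℝ] ℝ) →L[ℝ] ℝ}
    (hd : HasFDerivAt (fun f : Y →L[ℝ] ℝ => ‖f‖) ξ φ) {ε : ℝ} (hε : 0 < ε) :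
    ∃ δ > 0, ∀ x : Y, ‖x‖ ≤ 1 → ‖φ‖ - δ ≤ φ x →
      ‖(inclusionInDoubleDual ℝ Y) x - ξ‖ ≤ ε := by
  have hlo := hd.isLittleO
  rw [Asymptotics.isLittleO_iff] at hlo
  have hev := hlo (c := ε/4) (by positivity)
  rw [Metric.eventually_nhds_iff] at hev
  obtain ⟨t, ht, hball⟩ := hev
  refine ⟨t * ε / 8, by positivity, fun x hx hφx => ?_⟩
  have key : ∀ k : Y →L[ℝ] ℝ, k x - ξ k ≤ ε/2 * ‖k‖ := by
    intro k
    rcases eq_or_ne k 0 with rfl | hk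
    · simp
    have hknorm : (0:ℝ) < ‖k‖ := norm_pos_iff.2 hk
    set c : ℝ := t / (2 * ‖k‖) with hc
    have hcpos : 0 < c := by positivity
    have hdist : dist (φ + c • k) φ < t := by
      rw [dist_eq_norm]
      have : ‖φ + c • k - φ‖ = c * ‖k‖ := by
        rw [add_sub_cancel_left, norm_smul c k, Real.norm_eq_abs, abs_of_pos hcpos]
      rw [this, hc, div_mul_eq_mul_div, div_lt_iff₀ (by positivity)]
      nlinarith
    have hb := hball hdist
    simp only [add_sub_cancel_left] at hb
    have hnsmul : ‖c • k‖ = c * ‖k‖ := by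
      rw [norm_smul c k, Real.norm_eq_abs, abs_of_pos hcpos]
    rw [hnsmul] at hb
    -- hb : |‖φ + c•k‖ - ‖φ‖ - ξ (c • k)| ≤ ε/4 * (c * ‖k‖)
    have h1 : (φ + c • k) x ≤ ‖φ + c • k‖ := by
      calc (φ + c • k) x ≤ |(φ + c • k) x| := le_abs_self _
        _ ≤ ‖φ + c • k‖ * ‖x‖ := (φ + c • k).le_opNorm x
        _ ≤ ‖φ + c • k‖ * 1 := by gcongr
        _ = _ := mul_one _
    have h2 : (φ + c • k) x = φ x + c * k x := by simp
    have h3 : ‖φ + c • k‖ ≤ ‖φ‖ + ξ (c • k) + ε/4 * (c * ‖k‖) := by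
      have := abs_le.1 hb
      linarith [this.2]
    have h4 : ξ (c • k) = c * ξ k := by simp
    have hδ' : ‖φ‖ - t * ε / 8 ≤ φ x := hφx
    have hcomb : c * k x ≤ c * ξ k + ε/4 * (c * ‖k‖) + t * ε / 8 := by
      rw [h2] at h1; rw [h4] at h3; linarith
    have hck : c * ‖k‖ = t / 2 := by
      rw [hc]; field_simp
    have hfin : c * (k x - ξ k) ≤ c * (ε/2 * ‖k‖) := by nlinarith
    exact (mul_le_mul_iff_right₀ hcpos).1 hfin
  have key2 : ∀ k : Y →L[ℝ] ℝ, |k x - ξ k| ≤ ε/2 * ‖k‖ := by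
    intro k
    rw [abs_le]
    constructor
    · have := key (-k)
      simp only [ContinuousLinearMap.neg_apply, map_neg, norm_neg] at this
      linarith
    · exact key k
  have : ‖(inclusionInDoubleDual ℝ Y) x - ξ‖ ≤ ε/2 :=
    ContinuousLinearMap.opNorm_le_bound _ (by positivity) fun k => by
      simpa [inclusionInDoubleDual, Real.norm_eq_abs, abs_sub_comm,
        mul_comm] using key2 k
  linarith
/-- Šmulyan: the Fréchet derivative of the dual norm is given by a point of the predual. -/
lemma smulyan [CompleteSpace Y] (φ : Y →L[ℝ] ℝ) (hφ : φ ≠ 0)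
    {ξ : (Y →L[ℝ] ℝ) →L[ℝ] ℝ}
    (hd : HasFDerivAt (fun f : Y →L[ℝ] ℝ => ‖f‖) ξ φ) :
    ∃ y : Y, ‖y‖ = 1 ∧ φ y = ‖φ‖ ∧ ∀ k : Y →L[ℝ] ℝ, ξ k = k y := by
  have hφpos : 0 < ‖φ‖ := norm_pos_iff.2 hφ
  -- choose an approximating sequence
  have hex : ∀ n : ℕ, ∃ x : Y, ‖x‖ ≤ 1 ∧ ‖φ‖ - 1/(n+1) ≤ φ x ∧
      ‖(inclusionInDoubleDual ℝ Y) x - ξ‖ ≤ 1/(n+1) := by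
    intro n
    have hn : (0:ℝ) < 1/(n+1) := by positivity
    obtain ⟨δ, hδ, hδp⟩ := smulyan_approx φ hd hn
    have hlt : ‖φ‖ - min δ (1/(n+1)) < ‖φ‖ := by
      have : 0 < min δ (1/(n+1)) := lt_min hδ hn
      linarith
    obtain ⟨x, hx, hφx⟩ := φ.exists_lt_apply_of_lt_opNorm hlt
    rw [Real.norm_eq_abs] at hφx
    set x' := if φ x < 0 then -x else x with hx'
    have hφx' : φ x' = |φ x| := by
      rw [hx']; rcases lt_or_ge (φ x) 0 with hc | hc
      · simp [hc, abs_of_neg hc]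
      · simp [not_lt.2 hc, abs_of_nonneg hc]
    have hnx' : ‖x'‖ ≤ 1 := by rw [hx']; split <;> simpa using le_of_lt hx
    have h1 : ‖φ‖ - min δ (1/(n+1)) ≤ φ x' := by rw [hφx']; linarith
    refine ⟨x', hnx', ?_, ?_⟩
    · calc ‖φ‖ - 1/(n+1) ≤ ‖φ‖ - min δ (1/(n+1)) := by
            have := min_le_right δ (1/(n+1)); linarith
        _ ≤ φ x' := h1
    · refine hδp x' hnx' ?_
      calc ‖φ‖ - δ ≤ ‖φ‖ - min δ (1/(n+1)) := by
            have := min_le_left δ (1/(n+1)); linarith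
        _ ≤ φ x' := h1
  choose xs hxs1 hxs2 hxs3 using hex
  have htend0 : Filter.Tendsto (fun n : ℕ => 1/((n:ℝ)+1)) Filter.atTop (nhds 0) :=
    tendsto_one_div_add_atTop_nhds_zero_nat
  -- the image sequence converges to ξ
  have htendι : Filter.Tendsto (fun n => (inclusionInDoubleDual ℝ Y) (xs n))
      Filter.atTop (nhds ξ) := by
    apply (tendsto_iff_norm_sub_tendsto_zero (E := StrongDual ℝ (StrongDual ℝ Y))).2
    exact squeeze_zero (fun n => by positivity) hxs3 htend0
  -- hence xs is Cauchy
  have hcauchy : CauchySeq xs := by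
    have h1 : CauchySeq (fun n => (inclusionInDoubleDual ℝ Y) (xs n)) := htendι.cauchySeq
    rw [Metric.cauchySeq_iff]; replace h1 := (Metric.cauchySeq_iff (α := StrongDual ℝ (StrongDual ℝ Y))).1 h1
    intro ε hε
    obtain ⟨N, hN⟩ := h1 ε hε
    refine ⟨N, fun m hm n hn => ?_⟩
    have := hN m hm n hn
    replace this : ‖(inclusionInDoubleDual ℝ Y) (xs m) - (inclusionInDoubleDual ℝ Y) (xs n)‖ < ε := by
      rw [dist_eq_norm (E := StrongDual ℝ (StrongDual ℝ Y))] at this; exact this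
    rw [← map_sub] at this
    have hnm : ‖(inclusionInDoubleDual ℝ Y) (xs m - xs n)‖ = ‖xs m - xs n‖ :=
      (inclusionInDoubleDualLi ℝ (E := Y)).norm_map (xs m - xs n)
    rw [hnm] at this
    rwa [dist_eq_norm]
  obtain ⟨y, hy⟩ := cauchySeq_tendsto_of_complete hcauchy
  have hιy : (inclusionInDoubleDual ℝ Y) y = ξ :=
    tendsto_nhds_unique (((inclusionInDoubleDual ℝ Y).continuous.tendsto y).comp hy) htendι
  have hξy : ∀ k : Y →L[ℝ] ℝ, ξ k = k y := by
    intro k; rw [← hιy]; rfl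
  have hφy : φ y = ‖φ‖ := by
    have h1 : Filter.Tendsto (fun n => φ (xs n)) Filter.atTop (nhds (φ y)) :=
      (φ.continuous.tendsto y).comp hy
    have h2 : Filter.Tendsto (fun n => φ (xs n)) Filter.atTop (nhds ‖φ‖) := by
      have hub : ∀ n, φ (xs n) ≤ ‖φ‖ := fun n => by
        calc φ (xs n) ≤ |φ (xs n)| := le_abs_self _
          _ ≤ ‖φ‖ * ‖xs n‖ := φ.le_opNorm _
          _ ≤ ‖φ‖ * 1 := by gcongr; exact hxs1 n
          _ = ‖φ‖ := mul_one _
      have hlb := hxs2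
      have : Filter.Tendsto (fun n : ℕ => ‖φ‖ - 1/((n:ℝ)+1)) Filter.atTop (nhds ‖φ‖) := by
        simpa using (tendsto_const_nhds (x := ‖φ‖)).sub htend0
      exact tendsto_of_tendsto_of_tendsto_of_le_of_le this tendsto_const_nhds hlb hub
    exact tendsto_nhds_unique h1 h2
  have hny : ‖y‖ = 1 := by
    have hle : ‖y‖ ≤ 1 := by
      have := (continuous_norm.tendsto y).comp hy
      exact le_of_tendsto this (Filter.Eventually.of_forall hxs1)
    have hge : 1 ≤ ‖y‖ := by
      by_contra hlt
      push_neg at hlt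
      have : φ y ≤ ‖φ‖ * ‖y‖ := by
        calc φ y ≤ |φ y| := le_abs_self _
          _ ≤ ‖φ‖ * ‖y‖ := φ.le_opNorm y
      rw [hφy] at this
      nlinarith
    linarith
  exact ⟨y, hny, hφy, hξy⟩
/-- If the dual norm is differentiable at `g` and `y₀` is a unit vector normed by `g`,
then the derivative is evaluation at `y₀`. -/
lemma fderiv_dual_norm_eq (g : Y →L[ℝ] ℝ) {D : (Y →L[ℝ] ℝ) →L[ℝ] ℝ}
    (hd : HasFDerivAt (fun f : Y →L[ℝ] ℝ => ‖f‖) D g)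
    {y₀ : Y} (hy₀ : ‖y₀‖ = 1) (hgy₀ : g y₀ = ‖g‖) (k : Y →L[ℝ] ℝ) :
    D k = k y₀ := by
  set q : ℝ → ℝ := fun t => ‖g + t • k‖ - (g + t • k) y₀ with hq
  have hq0 : q 0 = 0 := by simp [hq, hgy₀]
  have hqnn : ∀ t, 0 ≤ q t := by
    intro t
    have : (g + t • k) y₀ ≤ ‖g + t • k‖ := by
      calc (g + t • k) y₀ ≤ |(g + t • k) y₀| := le_abs_self _
        _ ≤ ‖g + t • k‖ * ‖y₀‖ := (g + t • k).le_opNorm y₀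
        _ = ‖g + t • k‖ := by rw [hy₀, mul_one]
    simp only [hq]; linarith
  have hmin : IsLocalMin q 0 := by
    refine Filter.Eventually.of_forall fun t => ?_
    rw [hq0]; exact hqnn t
  have hline : HasDerivAt (fun t : ℝ => g + t • k) k 0 := by
    have h1 : HasDerivAt (fun t : ℝ => t • k) ((1:ℝ) • k) 0 :=
      (hasDerivAt_id 0).smul_const k
    simpa using h1.const_add g
  have hd1 : HasDerivAt (fun t : ℝ => ‖g + t • k‖) (D k) 0 := by
    have hg0 : g + (0:ℝ) • k = g := by simp
    have hd' : HasFDerivAt (fun f : Y →L[ℝ] ℝ => ‖f‖) D (g + (0:ℝ) • k) := by rw [hg0]; exact hd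
    exact hd'.comp_hasDerivAt 0 hline
  have hd2 : HasDerivAt (fun t : ℝ => (g + t • k) y₀) (k y₀) 0 := by
    have h1 : HasDerivAt (fun t : ℝ => g y₀ + t * k y₀) (k y₀) 0 := by
      simpa using ((hasDerivAt_id 0).mul_const (k y₀)).const_add (g y₀)
    have h2 : (fun t : ℝ => (g + t • k) y₀) = fun t : ℝ => g y₀ + t * k y₀ := by
      funext t; simp
    rw [h2]; exact h1
  have hdq : HasDerivAt q (D k - k y₀) 0 := hd1.sub hd2
  have := hmin.hasDerivAt_eq_zero hdq
  linarith

end AuxiliaryLemmas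

section Core
variable {Y Z : Type*} [NormedAddCommGroup Y] [NormedSpace ℝ Y] [CompleteSpace Y]
  [NormedAddCommGroup Z] [NormedSpace ℝ Z]

lemma flat_kernel
    (hsmooth : ContDiffOn ℝ 2 (fun f : Y →L[ℝ] ℝ => ‖f‖) {0}ᶜ)
    (A : Y →L[ℝ] Y) (B : Z →L[ℝ] Y)
    {g : Y →L[ℝ] ℝ} {h : Z →L[ℝ] ℝ} {y₀ : Y} {z₀ : Z} {v : ℝ}
    (hg0 : g ≠ 0) (hy₀1 : ‖y₀‖ = 1) (hz₀le : ‖z₀‖ ≤ 1)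
    (hgy₀ : g y₀ = ‖g‖) (hhz₀ : h z₀ = ‖h‖) (hgh1 : ‖g‖ + ‖h‖ = 1)
    (hv : |g (A y₀ + B z₀)| = v)
    (key : ∀ (y : Y) (z' : Z) (g' : Y →L[ℝ] ℝ), ‖(y, z')‖ = 1 → ‖g'‖ + ‖h‖ = 1 →
      g' y + h z' = 1 → |g' (A y + B z')| ≤ v) :
    ∀ z ∈ FlatDirections z₀, B z = 0 := by
  have ha : (0:ℝ) < ‖g‖ := norm_pos_iff.2 hg0
  set w := g (A y₀ + B z₀) with hw
  -- differentiability of the dual norm off zero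
  have hNd : ∀ (φ : Y →L[ℝ] ℝ), φ ≠ 0 →
      HasFDerivAt (fun f : Y →L[ℝ] ℝ => ‖f‖) (fderiv ℝ (fun f : Y →L[ℝ] ℝ => ‖f‖) φ) φ := by
    intro φ hφ
    have hmem : ({0}ᶜ : Set (Y →L[ℝ] ℝ)) ∈ nhds φ :=
      isOpen_compl_singleton.mem_nhds (by simpa using hφ)
    exact ((hsmooth.contDiffAt hmem).differentiableAt (by norm_num)).hasFDerivAt
  intro z hzflat
  obtain ⟨hz1, hz2⟩ := hzflat
  -- h vanishes on flat directions
  have hhz : h z = 0 := by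
    have e1 : h z₀ + h z ≤ ‖h‖ := by
      calc h z₀ + h z = h (z₀ + z) := (map_add h z₀ z).symm
        _ ≤ |h (z₀ + z)| := le_abs_self _
        _ ≤ ‖h‖ * ‖z₀ + z‖ := h.le_opNorm _
        _ ≤ ‖h‖ * 1 := by gcongr
        _ = ‖h‖ := mul_one _
    have e2 : h z₀ - h z ≤ ‖h‖ := by
      calc h z₀ - h z = h (z₀ - z) := (map_sub h z₀ z).symm
        _ ≤ |h (z₀ - z)| := le_abs_self _
        _ ≤ ‖h‖ * ‖z₀ - z‖ := h.le_opNorm _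
        _ ≤ ‖h‖ * 1 := by gcongr
        _ = ‖h‖ := mul_one _
    rw [hhz₀] at e1 e2
    linarith
  -- step 1 : g (B z) = 0
  have hpair : ∀ s : ℝ, ‖z₀ + s • z‖ ≤ 1 → |w + s * g (B z)| ≤ v := by
    intro s hs
    have h1 : ‖(y₀, z₀ + s • z)‖ = 1 := by
      rw [Prod.norm_def, hy₀1]
      simp only [max_eq_left hs]
    have h2 : g y₀ + h (z₀ + s • z) = 1 := by
      rw [map_add, map_smul, smul_eq_mul, hhz, hgy₀, hhz₀]
      ring_nf
      linarith [hgh1]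
    have h3 := key y₀ (z₀ + s • z) g h1 hgh1 h2
    have h4 : g (A y₀ + B (z₀ + s • z)) = w + s * g (B z) := by
      have hB : B (z₀ + s • z) = B z₀ + s • B z := by
        rw [map_add, map_smul]
      rw [map_add, hB, map_add, map_smul, smul_eq_mul, hw, map_add]
      ring
    rwa [h4] at h3
  have hz₀pz : ‖z₀ + (1:ℝ) • z‖ ≤ 1 := by rwa [one_smul]
  have hz₀mz : ‖z₀ + (-1:ℝ) • z‖ ≤ 1 := by
    rw [neg_smul, one_smul, ← sub_eq_add_neg]; exact hz2
  have hgBz : g (B z) = 0 := by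
    have e1 := hpair 1 hz₀pz
    have e2 := hpair (-1) hz₀mz
    rw [one_mul] at e1
    rw [neg_one_mul] at e2
    have f1 := abs_le.1 e1
    have f2 := abs_le.1 e2
    rw [← hv] at f1 f2
    rcases abs_cases w with ⟨habs, hsign⟩ | ⟨habs, hsign⟩ <;>
      rw [habs] at f1 f2 <;> linarith [f1.1, f1.2, f2.1, f2.2]
  -- step 2: all functionals kill B z
  suffices hkz : ∀ k : Y →L[ℝ] ℝ, k (B z) = 0 by
    by_contra hBz
    obtain ⟨k, _, hk2⟩ := exists_dual_vector ℝ (B z) (norm_ne_zero_iff.2 hBz)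
    rw [hkz k] at hk2
    exact hBz (norm_eq_zero.1 hk2.symm)
  intro k
  rcases eq_or_ne k 0 with rfl | hk0
  · simp
  by_cases hw0 : w = 0
  -- if w = 0 then v = 0; handled by a direct argument
  · have hv0 : v = 0 := by rw [← hv, hw0, abs_zero]
    by_contra hkBz
    have hBzne : B z ≠ 0 := fun hc => hkBz (by rw [hc, map_zero])
    have hBznorm : (0:ℝ) < ‖B z‖ := norm_pos_iff.2 hBzne
    set y : Y := ‖B z‖⁻¹ • B z with hydef
    have hyn : ‖y‖ = 1 := norm_smul_inv_norm hBzne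
    have hyne : y ≠ 0 := fun hc => by rw [hc, norm_zero] at hyn; norm_num at hyn
    obtain ⟨ψ, hψ1, hψ2⟩ := exists_dual_vector ℝ y (norm_ne_zero_iff.2 hyne)
    rw [hyn] at hψ2
    set g' : Y →L[ℝ] ℝ := ‖g‖ • ψ with hg'def
    have hg'n : ‖g'‖ = ‖g‖ := by
      rw [hg'def, norm_smul (‖g‖) ψ, Real.norm_eq_abs, abs_of_pos ha, hψ1, mul_one]
    have hg'y : g' y = ‖g‖ := by
      rw [hg'def, ContinuousLinearMap.smul_apply, smul_eq_mul]
      rw [show ψ y = 1 from by exact_mod_cast hψ2, mul_one]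
    have hkey0 : ∀ s : ℝ, ‖z₀ + s • z‖ ≤ 1 → g' (A y + B (z₀ + s • z)) = 0 := by
      intro s hs
      have h1 : ‖(y, z₀ + s • z)‖ = 1 := by
        rw [Prod.norm_def, hyn]
        simp only [max_eq_left hs]
      have h2 : g' y + h (z₀ + s • z) = 1 := by
        rw [show h (z₀ + s • z) = h z₀ + s * h z from by
          rw [map_add, map_smul, smul_eq_mul], hhz, hg'y, hhz₀]
        ring_nf
        linarith [hgh1]
      have h3 := key y (z₀ + s • z) g' h1 (by rw [hg'n]; exact hgh1) h2
      rw [hv0] at h3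
      exact abs_eq_zero.1 (le_antisymm h3 (abs_nonneg _))
    have e1 := hkey0 1 hz₀pz
    have e2 := hkey0 (-1) hz₀mz
    have hB1 : B (z₀ + (1:ℝ) • z) = B z₀ + B z := by rw [one_smul, map_add]
    have hB2 : B (z₀ + (-1:ℝ) • z) = B z₀ - B z := by
      rw [neg_smul, one_smul, ← sub_eq_add_neg, map_sub]
    rw [hB1, map_add, map_add] at e1
    rw [hB2, map_add, map_sub] at e2
    have hgBz' : g' (B z) = 0 := by linarith
    have hcontr : g' (B z) = ‖g‖ * ‖B z‖ := by
      have hBzy : B z = ‖B z‖ • y := by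
        rw [hydef, smul_smul, mul_inv_cancel₀ (ne_of_gt hBznorm), one_smul]
      rw [hg'def, ContinuousLinearMap.smul_apply, smul_eq_mul]
      rw [show ψ (B z) = ‖B z‖ from by
        conv_lhs => rw [hBzy]
        rw [map_smul, smul_eq_mul, show ψ y = 1 from by exact_mod_cast hψ2, mul_one]]
    rw [hgBz'] at hcontr
    nlinarith
  -- main analytic case
  · have hknorm : (0:ℝ) < ‖k‖ := norm_pos_iff.2 hk0
    set δ : ℝ := ‖g‖ / (2 * ‖k‖) with hδdef
    have hδpos : 0 < δ := by positivity
    set u : ℝ → (Y →L[ℝ] ℝ) := fun t => g + t • k with hudef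
    have hu0 : u 0 = g := by simp [hudef]
    have hulb : ∀ t : ℝ, |t| < δ → ‖g‖/2 ≤ ‖u t‖ := by
      intro t ht
      have h1 : ‖g‖ ≤ ‖u t‖ + ‖t • k‖ := by
        calc ‖g‖ = ‖u t - t • k‖ := by rw [hudef]; simp
          _ ≤ ‖u t‖ + ‖t • k‖ := norm_sub_le _ _
      have h2 : ‖t • k‖ = |t| * ‖k‖ := by rw [norm_smul t k, Real.norm_eq_abs]
      have h3 : |t| * ‖k‖ < δ * ‖k‖ := mul_lt_mul_of_pos_right ht hknorm
      have h4 : δ * ‖k‖ = ‖g‖/2 := by rw [hδdef]; field_simp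
      linarith
    have hune : ∀ t : ℝ, |t| < δ → u t ≠ 0 := by
      intro t ht hc
      have := hulb t ht; rw [hc, norm_zero] at this; linarith
    set c : ℝ → (Y →L[ℝ] ℝ) := fun t => (‖g‖ / ‖u t‖) • u t with hcdef
    have hc0 : c 0 = g := by
      simp only [hcdef, hu0, div_self (ne_of_gt ha), one_smul]
    have hcnorm : ∀ t, |t| < δ → ‖c t‖ = ‖g‖ := by
      intro t ht
      have hut : (0:ℝ) < ‖u t‖ := lt_of_lt_of_le (by linarith) (hulb t ht)
      simp only [hcdef]
      rw [norm_smul (‖g‖/‖u t‖) (u t), Real.norm_eq_abs, abs_of_pos (div_pos ha hut),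
        div_mul_cancel₀ _ (ne_of_gt hut)]
    have hcne : ∀ t, |t| < δ → c t ≠ 0 := by
      intro t ht hc
      have := hcnorm t ht; rw [hc, norm_zero] at this; linarith
    have hsm : ∀ t, |t| < δ → ∃ y : Y, ‖y‖ = 1 ∧ (c t) y = ‖g‖ ∧
        ∀ k' : Y →L[ℝ] ℝ, fderiv ℝ (fun f : Y →L[ℝ] ℝ => ‖f‖) (c t) k' = k' y := by
      intro t ht
      obtain ⟨y, h1, h2, h3⟩ := smulyan (c t) (hcne t ht) (hNd _ (hcne t ht))
      exact ⟨y, h1, by rw [h2, hcnorm t ht], h3⟩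
    set σf : ℝ → ℝ :=
      fun t => (fderiv ℝ (fun f : Y →L[ℝ] ℝ => ‖f‖) (c t)) ((c t).comp A) + (c t) (B z₀)
      with hσdef
    set βf : ℝ → ℝ := fun t => (c t) (B z) with hβdef
    have hbound : ∀ t, |t| < δ → ∀ s : ℝ, ‖z₀ + s • z‖ ≤ 1 →
        |σf t + s * βf t| ≤ v := by
      intro t ht s hs
      obtain ⟨y, hy1, hy2, hy3⟩ := hsm t ht
      have h1 : ‖(y, z₀ + s • z)‖ = 1 := by
        rw [Prod.norm_def, hy1]; simp only [max_eq_left hs]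
      have h2 : (c t) y + h (z₀ + s • z) = 1 := by
        rw [show h (z₀ + s • z) = h z₀ + s * h z from by
          rw [map_add, map_smul, smul_eq_mul], hhz, hy2, hhz₀]
        ring_nf
        linarith [hgh1]
      have h3 := key y (z₀ + s • z) (c t) h1 (by rw [hcnorm t ht]; exact hgh1) h2
      have h4 : (c t) (A y + B (z₀ + s • z)) = σf t + s * βf t := by
        have hB : B (z₀ + s • z) = B z₀ + s • B z := by rw [map_add, map_smul]
        rw [map_add, hB, map_add, map_smul, smul_eq_mul]
        simp only [hσdef, hβdef]
        rw [hy3 ((c t).comp A), ContinuousLinearMap.comp_apply]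
        ring
      rwa [h4] at h3
    -- differentiability of σf and derivative of βf at 0
    have hu' : HasDerivAt u k 0 := by
      have h1 : HasDerivAt (fun t : ℝ => t • k) ((1:ℝ) • k) 0 := (hasDerivAt_id 0).smul_const k
      rw [hudef]; simpa using h1.const_add g
    have hNg : DifferentiableAt ℝ (fun f : Y →L[ℝ] ℝ => ‖f‖) g :=
      (hNd g hg0).differentiableAt
    have hNu : DifferentiableAt ℝ (fun t => ‖u t‖) 0 := by
      have hNg' : DifferentiableAt ℝ (fun f : Y →L[ℝ] ℝ => ‖f‖) (u 0) := by
        rw [hu0]; exact hNg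
      exact hNg'.comp 0 hu'.differentiableAt
    have hu0norm : ‖u 0‖ = ‖g‖ := by rw [hu0]
    have hqd : DifferentiableAt ℝ (fun t => ‖g‖ / ‖u t‖) 0 :=
      (differentiableAt_const _).div hNu (by rw [hu0norm]; exact ne_of_gt ha)
    have hcd : DifferentiableAt ℝ c 0 := hqd.smul hu'.differentiableAt
    have hCA : ContDiffAt ℝ 2 (fun f : Y →L[ℝ] ℝ => ‖f‖) g :=
      hsmooth.contDiffAt (isOpen_compl_singleton.mem_nhds (by simpa using hg0))
    have hDd' : DifferentiableAt ℝ (fderiv ℝ (fun f : Y →L[ℝ] ℝ => ‖f‖)) (c 0) := by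
      rw [hc0]
      exact ((hCA.fderiv_right (m := 1) (by norm_num)).differentiableAt one_ne_zero)
    have hDc : DifferentiableAt ℝ
        (fun t => fderiv ℝ (fun f : Y →L[ℝ] ℝ => ‖f‖) (c t)) 0 :=
      DifferentiableAt.comp (g := fderiv ℝ (fun f : Y →L[ℝ] ℝ => ‖f‖)) (f := c) 0 hDd' hcd
    have hcompA : DifferentiableAt ℝ (fun t => (c t).comp A) 0 :=
      hcd.clm_comp (differentiableAt_const A)
    have hσd : DifferentiableAt ℝ σf 0 :=
      (hDc.clm_apply hcompA).add (hcd.clm_apply (differentiableAt_const (B z₀)))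
    obtain ⟨σ', hσ'⟩ : ∃ d, HasDerivAt σf d 0 := ⟨_, hσd.hasDerivAt⟩
    have hβeq : βf = fun t => (‖g‖ / ‖u t‖) * (t * k (B z)) := by
      funext t
      simp only [hβdef, hcdef]
      rw [ContinuousLinearMap.smul_apply, smul_eq_mul]
      congr 1
      simp only [hudef, ContinuousLinearMap.add_apply, ContinuousLinearMap.smul_apply,
        smul_eq_mul, hgBz, zero_add]
    have hβ' : HasDerivAt βf (k (B z)) 0 := by
      rw [hβeq]
      have h2 : HasDerivAt (fun t : ℝ => t * k (B z)) (k (B z)) 0 := by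
        simpa using (hasDerivAt_id (0:ℝ)).mul_const (k (B z))
      have h3 := hqd.hasDerivAt.mul h2
      exact h3.congr_deriv (by rw [hu0norm]; field_simp; ring)
    -- the sign of w
    set ε : ℝ := if 0 ≤ w then (1:ℝ) else -1 with hεdef
    have hεw : ε * w = v := by
      rw [← hv, hεdef]
      split
      · rename_i hh; rw [abs_of_nonneg hh, one_mul]
      · rename_i hh; push_neg at hh; rw [abs_of_neg hh]; ring
    have hεcases : ε = 1 ∨ ε = -1 := by
      rw [hεdef]; split; exacts [Or.inl rfl, Or.inr rfl]
    have hεabs : |ε| = 1 := by rcases hεcases with hh | hh <;> rw [hh] <;> norm_num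
    have hball : ∀ᶠ t : ℝ in nhds 0, |t| < δ := by
      refine Filter.eventually_of_mem (Metric.ball_mem_nhds (0:ℝ) hδpos) fun t ht => ?_
      rwa [Metric.mem_ball, Real.dist_eq, sub_zero] at ht
    have hσ0' : σf 0 = w := by
      simp only [hσdef]
      rw [hc0, fderiv_dual_norm_eq g (hNd g hg0) hy₀1 hgy₀ (g.comp A),
        ContinuousLinearMap.comp_apply, hw, map_add]
    have hβ0' : βf 0 = 0 := by simp only [hβdef]; rw [hc0]; exact hgBz
    have hmax : ∀ s : ℝ, ‖z₀ + s • z‖ ≤ 1 →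
        IsLocalMax (fun t => ε * (σf t + s * βf t)) 0 := by
      intro s hs
      have hval : ε * (σf 0 + s * βf 0) = v := by
        rw [hσ0', hβ0', mul_zero, add_zero, hεw]
      have hb2 : ∀ᶠ t in nhds (0:ℝ), ε * (σf t + s * βf t) ≤ ε * (σf 0 + s * βf 0) := by
        rw [hval]
        filter_upwards [hball] with t ht
        calc ε * (σf t + s * βf t) ≤ |ε * (σf t + s * βf t)| := le_abs_self _
          _ = |ε| * |σf t + s * βf t| := abs_mul _ _
          _ ≤ 1 * v := by
              rw [hεabs]
              have := hbound t ht s hs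
              linarith
          _ = v := one_mul v
      exact hb2
    have hz₀0z : ‖z₀ + (0:ℝ) • z‖ ≤ 1 := by rwa [zero_smul, add_zero]
    have hder0 : HasDerivAt (fun t => ε * (σf t + (0:ℝ) * βf t))
        (ε * (σ' + (0:ℝ) * k (B z))) 0 := (hσ'.add (hβ'.const_mul (0:ℝ))).const_mul ε
    have hder1 : HasDerivAt (fun t => ε * (σf t + (1:ℝ) * βf t))
        (ε * (σ' + (1:ℝ) * k (B z))) 0 := (hσ'.add (hβ'.const_mul (1:ℝ))).const_mul ε
    have hres0 : ε * (σ' + (0:ℝ) * k (B z)) = 0 :=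
      (hmax 0 hz₀0z).hasDerivAt_eq_zero hder0
    have hres1 : ε * (σ' + (1:ℝ) * k (B z)) = 0 :=
      (hmax 1 hz₀pz).hasDerivAt_eq_zero hder1
    rcases hεcases with hh | hh <;> rw [hh] at hres0 hres1 <;> ring_nf at hres0 hres1 ⊢ <;>
      linarith
end Core

/-- Let `Y` have a dual norm which is `C²`-smooth away from the origin and let `Z` be
strongly flat. If the operator `T(y,z) = (A y + B z, 0)` on `X = Y ⊕∞ Z` attains its
numerical radius, then `B` has finite rank. -/
theorem finiteRank_of_attainsNumRadius
    {Y : Type*} [NormedAddCommGroup Y] [NormedSpace ℝ Y] [CompleteSpace Y]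
    {Z : Type*} [NormedAddCommGroup Z] [NormedSpace ℝ Z] [CompleteSpace Z]
    (hsmooth : ContDiffOn ℝ 2 (fun f : Y →L[ℝ] ℝ => ‖f‖) {0}ᶜ)
    (hZ : StronglyFlat Z)
    (A : Y →L[ℝ] Y) (B : Z →L[ℝ] Y)
    (T : WithLp ∞ (Y × Z) →L[ℝ] WithLp ∞ (Y × Z))
    (hT : ∀ (y : Y) (z : Z),
      T ((WithLp.prodContinuousLinearEquiv ∞ ℝ Y Z).symm (y, z)) =
        (WithLp.prodContinuousLinearEquiv ∞ ℝ Y Z).symm (A y + B z, 0))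
    (hattain : AttainsNumRadius T) :
    FiniteDimensional ℝ (LinearMap.range (B : Z →ₗ[ℝ] Y)) := by
  classical
  set e := prodIsoInf Y Z with hedef
  set eCLM := e.toLinearIsometry.toContinuousLinearMap with heCLM
  -- the supremum is an upper bound on all numerical values
  have hbdd : BddAbove {r : ℝ | ∃ (x : WithLp ∞ (Y × Z)) (f : _ →L[ℝ] ℝ),
      ‖x‖ = 1 ∧ ‖f‖ = 1 ∧ f x = 1 ∧ r = |f (T x)|} := by
    refine ⟨‖T‖, ?_⟩
    rintro r ⟨x, f, hx, hf, -, rfl⟩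
    calc |f (T x)| ≤ ‖f‖ * ‖T x‖ := f.le_opNorm _
      _ ≤ 1 * (‖T‖ * ‖x‖) := by rw [hf]; gcongr; exact T.le_opNorm x
      _ = ‖T‖ := by rw [hx]; ring
  have hmemle : ∀ (x : WithLp ∞ (Y × Z)) (f : _ →L[ℝ] ℝ), ‖x‖ = 1 → ‖f‖ = 1 → f x = 1 →
      |f (T x)| ≤ numRadius T := fun x f hx hf hfx =>
    le_csSup hbdd ⟨x, f, hx, hf, hfx, rfl⟩
  -- the key construction of numerical values from product data
  have key' : ∀ (y : Y) (z' : Z) (g' : Y →L[ℝ] ℝ) (h' : Z →L[ℝ] ℝ), ‖(y, z')‖ = 1 →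
      ‖g'‖ + ‖h'‖ = 1 → g' y + h' z' = 1 → |g' (A y + B z')| ≤ numRadius T := by
    intro y z' g' h' hp hn hone
    set x : WithLp ∞ (Y × Z) := e.symm (y, z') with hxdef
    set f : WithLp ∞ (Y × Z) →L[ℝ] ℝ := (pairFun g' h').comp eCLM with hfdef
    have hx : ‖x‖ = 1 := by rw [hxdef, e.symm.norm_map]; exact hp
    have hf : ‖f‖ = 1 := by
      rw [hfdef, heCLM, show ‖(pairFun g' h').comp e.toLinearIsometry.toContinuousLinearMap‖ =
        ‖pairFun g' h'‖ from ContinuousLinearMap.opNorm_comp_linearIsometryEquiv (pairFun g' h') e,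
        pairFun_norm]
      exact hn
    have hfx : f x = 1 := by
      rw [hfdef, hxdef]
      show pairFun g' h' (e (e.symm (y, z'))) = 1
      rw [e.apply_symm_apply, pairFun_apply]
      exact hone
    have hTx : T x = e.symm (A y + B z', 0) := by
      rw [hxdef]
      exact hT y z'
    have hfTx : f (T x) = g' (A y + B z') := by
      rw [hTx, hfdef]
      show pairFun g' h' (e (e.symm (A y + B z', 0))) = _
      rw [e.apply_symm_apply, pairFun_apply]
      simp
    rw [← hfTx]
    exact hmemle x f hx hf hfx
  -- decompose the attaining pair
  obtain ⟨x₀, f₀, hx₀n, hf₀n, hf₀x₀, hattval⟩ := hattain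
  set y₀ : Y := (e x₀).1 with hy₀def
  set z₀ : Z := (e x₀).2 with hz₀def
  set F₀ : (Y × Z) →L[ℝ] ℝ := f₀.comp e.symm.toLinearIsometry.toContinuousLinearMap with hF₀def
  set g : Y →L[ℝ] ℝ := F₀.comp (ContinuousLinearMap.inl ℝ Y Z) with hgdef
  set h : Z →L[ℝ] ℝ := F₀.comp (ContinuousLinearMap.inr ℝ Y Z) with hhdef
  have hF₀ : ∀ p : Y × Z, F₀ p = g p.1 + h p.2 := by
    intro p
    have hp : p = (p.1, (0:Z)) + ((0:Y), p.2) := by ext <;> simp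
    calc F₀ p = F₀ ((p.1, 0) + (0, p.2)) := by rw [← hp]
      _ = F₀ (p.1, 0) + F₀ (0, p.2) := map_add _ _ _
      _ = g p.1 + h p.2 := rfl
  have hFpair : F₀ = pairFun g h :=
    ContinuousLinearMap.ext fun p => by rw [hF₀ p, pairFun_apply]
  have hF₀n : ‖F₀‖ = 1 := by
    rw [hF₀def, show ‖f₀.comp e.symm.toLinearIsometry.toContinuousLinearMap‖ = ‖f₀‖ from
      ContinuousLinearMap.opNorm_comp_linearIsometryEquiv f₀ e.symm]
    exact hf₀n
  have hgh1 : ‖g‖ + ‖h‖ = 1 := by rw [← pairFun_norm g h, ← hFpair]; exact hF₀n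
  have hx₀e : e.symm (y₀, z₀) = x₀ := by
    rw [hy₀def, hz₀def]
    rw [show ((e x₀).1, (e x₀).2) = e x₀ from rfl, e.symm_apply_apply]
  have hF₀f₀ : ∀ p : Y × Z, F₀ p = f₀ (e.symm p) := fun p => rfl
  have hsum1 : g y₀ + h z₀ = 1 := by
    rw [← hF₀ (y₀, z₀), hF₀f₀, hx₀e]
    exact hf₀x₀
  have hpnorm : ‖(y₀, z₀)‖ = 1 := by
    rw [show ((y₀ : Y), (z₀ : Z)) = e x₀ from rfl, e.norm_map]
    exact hx₀n
  have hy₀le : ‖y₀‖ ≤ 1 := by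
    rw [Prod.norm_def] at hpnorm
    calc ‖y₀‖ ≤ max ‖y₀‖ ‖z₀‖ := le_max_left _ _
      _ = 1 := hpnorm
  have hz₀le : ‖z₀‖ ≤ 1 := by
    rw [Prod.norm_def] at hpnorm
    calc ‖z₀‖ ≤ max ‖y₀‖ ‖z₀‖ := le_max_right _ _
      _ = 1 := hpnorm
  have hgy₀le : g y₀ ≤ ‖g‖ := by
    calc g y₀ ≤ |g y₀| := le_abs_self _
      _ ≤ ‖g‖ * ‖y₀‖ := g.le_opNorm _
      _ ≤ ‖g‖ * 1 := by gcongr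
      _ = ‖g‖ := mul_one _
  have hhz₀le : h z₀ ≤ ‖h‖ := by
    calc h z₀ ≤ |h z₀| := le_abs_self _
      _ ≤ ‖h‖ * ‖z₀‖ := h.le_opNorm _
      _ ≤ ‖h‖ * 1 := by gcongr
      _ = ‖h‖ := mul_one _
  have hgy₀ : g y₀ = ‖g‖ := by linarith
  have hhz₀ : h z₀ = ‖h‖ := by linarith
  have hTx₀ : f₀ (T x₀) = g (A y₀ + B z₀) := by
    rw [← hx₀e]
    rw [show T (e.symm (y₀, z₀)) =
        (WithLp.prodContinuousLinearEquiv ∞ ℝ Y Z).symm (A y₀ + B z₀, 0) from hT y₀ z₀]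
    rw [show ((WithLp.prodContinuousLinearEquiv ∞ ℝ Y Z).symm (A y₀ + B z₀, (0:Z)) :
        WithLp ∞ (Y × Z)) = e.symm (A y₀ + B z₀, 0) from rfl]
    rw [← hF₀f₀, hF₀]
    simp
  have hv : |g (A y₀ + B z₀)| = numRadius T := by rw [← hTx₀]; exact hattval
  -- a helper for concluding when B is identically zero
  have hBzero : (∀ z : Z, ‖z‖ ≤ 1 → B z = 0) →
      FiniteDimensional ℝ (LinearMap.range (B : Z →ₗ[ℝ] Y)) := by
    intro hball
    have hB0 : ∀ z : Z, B z = 0 := by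
      intro z
      rcases eq_or_ne z 0 with rfl | hz
      · simp
      have hzn : (0:ℝ) < ‖z‖ := norm_pos_iff.2 hz
      have h1 : B (‖z‖⁻¹ • z) = 0 := hball _ (by
        rw [norm_smul (‖z‖⁻¹) z, Real.norm_eq_abs, abs_of_pos (by positivity),
          inv_mul_cancel₀ (ne_of_gt hzn)])
      rw [map_smul] at h1
      have := smul_eq_zero.1 h1
      rcases this with hc | hc
      · exact absurd hc (by positivity)
      · exact hc
    have hBl : (B : Z →ₗ[ℝ] Y) = 0 := LinearMap.ext fun z => hB0 z
    rw [hBl, LinearMap.range_zero]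
    infer_instance
  by_cases hv0 : numRadius T = 0
  · -- numerical radius zero: B vanishes
    refine hBzero fun z hz => ?_
    by_contra hBz
    have hBzn : (0:ℝ) < ‖B z‖ := norm_pos_iff.2 hBz
    set y : Y := ‖B z‖⁻¹ • B z with hydef
    have hyn : ‖y‖ = 1 := norm_smul_inv_norm hBz
    have hyne : y ≠ 0 := fun hc => by rw [hc, norm_zero] at hyn; norm_num at hyn
    obtain ⟨ψ, hψ1, hψ2⟩ := exists_dual_vector ℝ y (norm_ne_zero_iff.2 hyne)
    rw [hyn] at hψ2
    have hψy : ψ y = 1 := by exact_mod_cast hψ2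
    have hc1 : |ψ (A y + B z)| ≤ numRadius T := by
      refine key' y z ψ 0 ?_ (by simp [hψ1]) (by simp [hψy])
      rw [Prod.norm_def, hyn]
      simp only [max_eq_left hz]
    have hc2 : |ψ (A y + B 0)| ≤ numRadius T := by
      refine key' y 0 ψ 0 ?_ (by simp [hψ1]) (by simp [hψy])
      rw [Prod.norm_def, hyn, norm_zero]
      simp
    rw [hv0] at hc1 hc2
    have he1 : ψ (A y + B z) = 0 := abs_eq_zero.1 (le_antisymm hc1 (abs_nonneg _))
    have he2 : ψ (A y + B 0) = 0 := abs_eq_zero.1 (le_antisymm hc2 (abs_nonneg _))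
    rw [map_zero, add_zero] at he2
    rw [map_add, he2, zero_add] at he1
    have hψBz : ψ (B z) = ‖B z‖ := by
      have hBzy : B z = ‖B z‖ • y := by
        rw [hydef, smul_smul, mul_inv_cancel₀ (ne_of_gt hBzn), one_smul]
      conv_lhs => rw [hBzy]
      rw [map_smul, smul_eq_mul, hψy, mul_one]
    rw [he1] at hψBz
    linarith
  · -- main case
    have hw0 : g (A y₀ + B z₀) ≠ 0 := fun hc => hv0 (by rw [← hv, hc, abs_zero])
    have hg0 : g ≠ 0 := fun hc => hw0 (by rw [hc]; simp)
    have ha : (0:ℝ) < ‖g‖ := norm_pos_iff.2 hg0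
    have hy₀1 : ‖y₀‖ = 1 := by
      have h1 : ‖g‖ ≤ ‖g‖ * ‖y₀‖ := by
        calc ‖g‖ = g y₀ := hgy₀.symm
          _ ≤ |g y₀| := le_abs_self _
          _ ≤ ‖g‖ * ‖y₀‖ := g.le_opNorm _
      have h2 : ‖g‖ * 1 ≤ ‖g‖ * ‖y₀‖ := by rwa [mul_one]
      have h3 : 1 ≤ ‖y₀‖ := (mul_le_mul_iff_right₀ ha).1 h2
      linarith
    have hflat : ∀ z ∈ FlatDirections z₀, B z = 0 :=
      flat_kernel hsmooth A B hg0 hy₀1 hz₀le hgy₀ hhz₀ hgh1 hv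
        (fun y z' g' h1 h2 h3 => key' y z' g' h h1 h2 h3)
    by_cases hz₀1 : ‖z₀‖ = 1
    · -- use strong flatness
      haveI hfd := hZ z₀ hz₀1
      set W := (Submodule.span ℝ (FlatDirections z₀)).topologicalClosure with hWdef
      have hWker : W ≤ LinearMap.ker (B : Z →ₗ[ℝ] Y) := by
        rw [hWdef]
        refine Submodule.topologicalClosure_minimal _ ?_ ?_
        · exact Submodule.span_le.2 fun z hz => LinearMap.mem_ker.2 (hflat z hz)
        · exact ContinuousLinearMap.isClosed_ker B
      have hfact : (W.liftQ (B : Z →ₗ[ℝ] Y) hWker).comp W.mkQ = (B : Z →ₗ[ℝ] Y) :=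
        W.liftQ_mkQ _ _
      have hrange : LinearMap.range (B : Z →ₗ[ℝ] Y) =
          LinearMap.range (W.liftQ (B : Z →ₗ[ℝ] Y) hWker) := by
        conv_lhs => rw [← hfact]
        exact LinearMap.range_comp_of_range_eq_top _ (Submodule.range_mkQ W)
      rw [hrange]
      infer_instance
    · -- ‖z₀‖ < 1 : B vanishes on a ball, hence everywhere
      have hz₀lt : ‖z₀‖ < 1 := lt_of_le_of_ne hz₀le hz₀1
      refine hBzero fun z hz => ?_
      set r : ℝ := 1 - ‖z₀‖ with hrdef
      have hrpos : 0 < r := by rw [hrdef]; linarith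
      have hballflat : ∀ z' : Z, ‖z'‖ ≤ r → B z' = 0 := by
        intro z' hz'
        refine hflat z' ⟨?_, ?_⟩
        · calc ‖z₀ + z'‖ ≤ ‖z₀‖ + ‖z'‖ := norm_add_le _ _
            _ ≤ 1 := by rw [hrdef] at hz'; linarith
        · calc ‖z₀ - z'‖ ≤ ‖z₀‖ + ‖z'‖ := norm_sub_le _ _
            _ ≤ 1 := by rw [hrdef] at hz'; linarith
      rcases eq_or_ne z 0 with rfl | hzne
      · simp
      have hzn : (0:ℝ) < ‖z‖ := norm_pos_iff.2 hzne
      have h1 : B ((r / ‖z‖) • z) = 0 := by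
        refine hballflat _ ?_
        rw [norm_smul (r / ‖z‖) z, Real.norm_eq_abs, abs_of_pos (by positivity),
          div_mul_cancel₀ _ (ne_of_gt hzn)]
      rw [map_smul] at h1
      rcases smul_eq_zero.1 h1 with hc | hc
      · exact absurd hc (by positivity)
      · exact hc
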